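/- Suppose the probabilities P_Ω satisfy the Shearer criterion and every bad event has P_Ω(B) > 0. Then m ≤ W' ≤ Σ_{B∈𝓑} μ(B)/P_Ω(B), where m is the number of bad events. -/

import Mathlib

open scoped BigOperators ENNReal Classical

set_option linter.unusedSectionVars false
set_option linter.unusedVariables false
namespace LLL

/-- Two bad events are dependent iff their variable sets intersect. -/
def Dep {n : ℕ} {E : Type} (S : E → Finset (Fin n)) (b b' : E) : Prop :=
  (S b ∩ S b').Nonempty

/-- A witness DAG: a finite DAG with nodes labeled by bad events, where any two
nodes with dependent labels are joined by an edge (in one direction), and nodes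
with non-dependent labels have no edge. -/
structure WDag (n : ℕ) (E : Type) (S : E → Finset (Fin n)) where
  size : ℕ
  label : Fin size → E
  edge : Fin size → Fin size → Prop
  acyclic : ∀ v, ¬ Relation.TransGen edge v v
  edge_dep : ∀ v w, edge v w → Dep S (label v) (label w)
  dep_edge : ∀ v w, v ≠ w → Dep S (label v) (label w) → edge v w ∨ edge w v

namespace WDag

variable {n : ℕ} {E : Type} {S : E → Finset (Fin n)}

/-- Isomorphism of witness DAGs. -/
def Iso (G G' : WDag n E S) : Prop :=
  ∃ e : Fin G.size ≃ Fin G'.size,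
    (∀ v, G'.label (e v) = G.label v) ∧ ∀ v w, G'.edge (e v) (e w) ↔ G.edge v w

theorem Iso.refl (G : WDag n E S) : Iso G G :=
  ⟨Equiv.refl _, fun _ => rfl, fun _ _ => Iff.rfl⟩

theorem Iso.symm {G G' : WDag n E S} (h : Iso G G') : Iso G' G := by
  obtain ⟨e, hl, he⟩ := h
  refine ⟨e.symm, fun v => ?_, fun v w => ?_⟩
  · simpa using (hl (e.symm v)).symm
  · simpa using (he (e.symm v) (e.symm w)).symm

theorem Iso.trans {G₁ G₂ G₃ : WDag n E S} (h12 : Iso G₁ G₂) (h23 : Iso G₂ G₃) :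
    Iso G₁ G₃ := by
  obtain ⟨e, hl, he⟩ := h12
  obtain ⟨f, hl', he'⟩ := h23
  refine ⟨e.trans f, fun v => ?_, fun v w => ?_⟩
  · rw [Equiv.trans_apply, hl' (e v), hl v]
  · rw [Equiv.trans_apply, Equiv.trans_apply, he' (e v) (e w), he v w]

instance wdSetoid (n : ℕ) (E : Type) (S : E → Finset (Fin n)) : Setoid (WDag n E S) :=
  ⟨Iso, ⟨Iso.refl, Iso.symm, Iso.trans⟩⟩

/-- Isomorphism classes of witness DAGs. -/
def WClass (n : ℕ) (E : Type) (S : E → Finset (Fin n)) : Type :=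
  Quotient (wdSetoid n E S)

/-- The weight of a witness DAG: the product of the probabilities of its labels. -/
noncomputable def wt (P : E → ℝ) (G : WDag n E S) : ℝ := ∏ v, P (G.label v)

theorem wt_invariant (P : E → ℝ) {G G' : WDag n E S} (h : Iso G G') :
    wt P G = wt P G' := by
  obtain ⟨e, hl, _⟩ := h
  exact Fintype.prod_equiv e (fun v => P (G.label v)) (fun v => P (G'.label v))
    (fun v => by show P (G.label v) = P (G'.label (e v)); rw [hl v])

/-- The weight, as a function on isomorphism classes. -/
noncomputable def cwt (P : E → ℝ) : WClass n E S → ℝ :=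
  Quotient.lift (wt P) fun _ _ h => wt_invariant P h

theorem size_invariant {G G' : WDag n E S} (h : Iso G G') : G.size = G'.size := by
  obtain ⟨e, -, -⟩ := h
  simpa using Fintype.card_congr e

/-- The adjusted weight `a_ρ(G) = w(G) (1+ρ)^{|G|}`. -/
noncomputable def awt (P : E → ℝ) (ρ : ℝ) (G : WDag n E S) : ℝ :=
  wt P G * (1 + ρ) ^ G.size

theorem awt_invariant (P : E → ℝ) (ρ : ℝ) {G G' : WDag n E S} (h : Iso G G') :
    awt P ρ G = awt P ρ G' := by
  unfold awt
  rw [wt_invariant P h, size_invariant h]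

/-- The adjusted weight, as a function on isomorphism classes. -/
noncomputable def cawt (P : E → ℝ) (ρ : ℝ) : WClass n E S → ℝ :=
  Quotient.lift (awt P ρ) fun _ _ h => awt_invariant P ρ h

/-- A node is a sink if it has no outgoing edge. -/
def IsSink (G : WDag n E S) (v : Fin G.size) : Prop := ∀ w, ¬ G.edge v w

/-- A witness DAG has a single sink. -/
def SingleSink (G : WDag n E S) : Prop := ∃! v, IsSink G v

/-- A witness DAG has a single sink, labeled by `b`. -/
def SinkLabeled (G : WDag n E S) (b : E) : Prop :=
  ∃ v, IsSink G v ∧ G.label v = b ∧ ∀ w, IsSink G w → w = v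

end WDag

/-- A set of bad events is independent if no two distinct members are dependent. -/
def Indep {n : ℕ} {E : Type} (S : E → Finset (Fin n)) (I : Finset E) : Prop :=
  ∀ b ∈ I, ∀ b' ∈ I, b ≠ b' → ¬ Dep S b b'

/-- The independent-set polynomial `Q(I,p)`. -/
noncomputable def Q {n : ℕ} {E : Type} [Fintype E] (S : E → Finset (Fin n))
    (p : E → ℝ) (I : Finset E) : ℝ :=
  ∑ J ∈ Finset.univ.filter (fun J : Finset E => I ⊆ J ∧ Indep S J),
    (-1 : ℝ) ^ (J.card - I.card) * ∏ b ∈ J, p b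

/-- The Shearer criterion for the probability vector `p`. -/
def Shearer {n : ℕ} {E : Type} [Fintype E] (S : E → Finset (Fin n)) (p : E → ℝ) : Prop :=
  0 < Q S p ∅ ∧ ∀ I : Finset E, Indep S I → 0 ≤ Q S p I




variable {n : ℕ} {E : Type} [Fintype E]

variable {n : ℕ} {E : Type} [Fintype E]

theorem Dep.symm {S : E → Finset (Fin n)} {a b : E} (h : Dep S a b) : Dep S b a := by
  obtain ⟨x, hx⟩ := h
  exact ⟨x, by rw [Finset.inter_comm]; exact hx⟩

theorem Indep.subset {S : E → Finset (Fin n)} {I J : Finset E} (h : Indep S J)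
    (hIJ : I ⊆ J) : Indep S I :=
  fun a ha b hb hab => h a (hIJ ha) b (hIJ hb) hab

theorem indep_empty (S : E → Finset (Fin n)) : Indep S ∅ := by
  intro a ha; simp at ha

theorem indep_singleton (S : E → Finset (Fin n)) (b : E) : Indep S {b} := by
  intro a ha c hc hac
  simp only [Finset.mem_singleton] at ha hc
  exact absurd (ha.trans hc.symm) hac

/-- The closed neighborhood of a set of events. -/
noncomputable def cl (S : E → Finset (Fin n)) (I : Finset E) : Finset E :=
  Finset.univ.filter (fun b' => ∃ a ∈ I, a = b' ∨ Dep S a b')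

theorem mem_cl {S : E → Finset (Fin n)} {I : Finset E} {c : E} :
    c ∈ cl S I ↔ ∃ a ∈ I, a = c ∨ Dep S a c := by
  simp [cl]

theorem subset_cl {S : E → Finset (Fin n)} (I : Finset E) : I ⊆ cl S I :=
  fun a ha => mem_cl.2 ⟨a, ha, Or.inl rfl⟩

theorem cl_union {S : E → Finset (Fin n)} (I J : Finset E) :
    cl S (I ∪ J) = cl S I ∪ cl S J := by
  ext c
  simp only [mem_cl, Finset.mem_union]
  constructor
  · rintro ⟨a, ha | ha, h⟩
    · exact Or.inl ⟨a, ha, h⟩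
    · exact Or.inr ⟨a, ha, h⟩
  · rintro (⟨a, ha, h⟩ | ⟨a, ha, h⟩)
    · exact ⟨a, Or.inl ha, h⟩
    · exact ⟨a, Or.inr ha, h⟩

theorem cl_empty (S : E → Finset (Fin n)) : cl S (∅ : Finset E) = ∅ := by
  ext c; simp [mem_cl]

/-- weight of a finite set of events -/
noncomputable def wP (P : E → ℝ) (J : Finset E) : ℝ := ∏ b ∈ J, P b

/-- the signed independence polynomial restricted to `W` -/
noncomputable def qp (S : E → Finset (Fin n)) (P : E → ℝ) (W : Finset E) : ℝ :=
  ∑ J ∈ W.powerset.filter (Indep S), (-1 : ℝ) ^ J.card * wP P J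

/-- Key bijection: independent subsets of `W` containing an independent set `I`
are in bijection with independent subsets of `W \ cl S I`. -/
theorem sum_indep_superset {S : E → Finset (Fin n)} (I : Finset E) (hI : Indep S I)
    (W : Finset E) (hIW : I ⊆ W) (f : Finset E → ℝ) :
    ∑ J ∈ W.powerset.filter (fun J => Indep S J ∧ I ⊆ J), f J
      = ∑ J' ∈ (W \ cl S I).powerset.filter (Indep S), f (J' ∪ I) := by
  refine Finset.sum_nbij' (fun J => J \ I) (fun J' => J' ∪ I) ?_ ?_ ?_ ?_ ?_
  · intro J hJ
    simp only [Finset.mem_filter, Finset.mem_powerset] at hJ ⊢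
    obtain ⟨hJW, hind, hIJ⟩ := hJ
    refine ⟨fun a ha => ?_, hind.subset Finset.sdiff_subset⟩
    simp only [Finset.mem_sdiff] at ha ⊢
    refine ⟨hJW ha.1, fun hc => ?_⟩
    obtain ⟨i, hiI, hi⟩ := mem_cl.1 hc
    rcases hi with rfl | hdep
    · exact ha.2 hiI
    · exact hind i (hIJ hiI) a ha.1 (fun h => ha.2 (h ▸ hiI)) hdep
  · intro J' hJ'
    simp only [Finset.mem_filter, Finset.mem_powerset] at hJ' ⊢
    obtain ⟨hJ'W, hind⟩ := hJ'
    have hdisj : ∀ a ∈ J', a ∉ cl S I := fun a ha => (Finset.mem_sdiff.1 (hJ'W ha)).2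
    refine ⟨Finset.union_subset (fun a ha => (Finset.mem_sdiff.1 (hJ'W ha)).1) hIW, ?_,
      Finset.subset_union_right⟩
    intro a ha b hb hab
    rcases Finset.mem_union.1 ha with ha' | ha' <;> rcases Finset.mem_union.1 hb with hb' | hb'
    · exact hind a ha' b hb' hab
    · intro hd
      exact hdisj a ha' (mem_cl.2 ⟨b, hb', Or.inr hd.symm⟩)
    · intro hd
      exact hdisj b hb' (mem_cl.2 ⟨a, ha', Or.inr hd⟩)
    · exact hI a ha' b hb' hab
  · intro J hJ
    simp only [Finset.mem_filter, Finset.mem_powerset] at hJ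
    exact Finset.sdiff_union_of_subset hJ.2.2
  · intro J' hJ'
    simp only [Finset.mem_filter, Finset.mem_powerset] at hJ'
    have : Disjoint J' I := by
      refine Finset.disjoint_left.2 fun a ha haI => ?_
      exact (Finset.mem_sdiff.1 (hJ'.1 ha)).2 (subset_cl I haI)
    exact Finset.union_sdiff_cancel_right this
  · intro J hJ
    simp only [Finset.mem_filter, Finset.mem_powerset] at hJ
    rw [Finset.sdiff_union_of_subset hJ.2.2]

theorem wP_union_of_disjoint {P : E → ℝ} {J I : Finset E} (h : Disjoint J I) :
    wP P (J ∪ I) = wP P J * wP P I := by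
  unfold wP; rw [Finset.prod_union h]

theorem disjoint_of_subset_sdiff_cl {S : E → Finset (Fin n)} {I J' W : Finset E}
    (h : J' ⊆ W \ cl S I) : Disjoint J' I :=
  Finset.disjoint_left.2 fun a ha haI => (Finset.mem_sdiff.1 (h ha)).2 (subset_cl I haI)

/-- `Q S P I = wP P I * qp S P (univ \ cl S I)` for independent `I`. -/
theorem Q_eq {S : E → Finset (Fin n)} {P : E → ℝ} {I : Finset E} (hI : Indep S I) :
    Q S P I = wP P I * qp S P (Finset.univ \ cl S I) := by
  have h1 : (Finset.univ.filter (fun J : Finset E => I ⊆ J ∧ Indep S J))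
      = (Finset.univ : Finset E).powerset.filter (fun J => Indep S J ∧ I ⊆ J) := by
    ext J
    simp only [Finset.mem_filter, Finset.mem_powerset, Finset.mem_univ, true_and,
      Finset.subset_univ]
    tauto
  rw [Q, h1, sum_indep_superset I hI Finset.univ (Finset.subset_univ I)]
  rw [qp, Finset.mul_sum]
  refine Finset.sum_congr rfl fun J' hJ' => ?_
  simp only [Finset.mem_filter, Finset.mem_powerset] at hJ'
  have hd : Disjoint J' I := disjoint_of_subset_sdiff_cl hJ'.1
  have hcard : (J' ∪ I).card = J'.card + I.card := Finset.card_union_of_disjoint hd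
  rw [hcard, Nat.add_sub_cancel, Finset.prod_union hd]
  unfold wP
  ring


theorem powerset_filter_indep_eq (S : E → Finset (Fin n)) (U : Finset E) :
    U.powerset.filter (Indep S) = insert ∅ (U.powerset.filter (fun J => J.Nonempty ∧ Indep S J)) := by
  ext J
  simp only [Finset.mem_insert, Finset.mem_filter, Finset.mem_powerset]
  constructor
  · rintro ⟨hJU, hind⟩
    rcases J.eq_empty_or_nonempty with rfl | hne
    · exact Or.inl rfl
    · exact Or.inr ⟨hJU, hne, hind⟩
  · rintro (rfl | ⟨h1, _, h3⟩)
    · exact ⟨Finset.empty_subset U, indep_empty S⟩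
    · exact ⟨h1, h3⟩

theorem sum_indep_split (S : E → Finset (Fin n)) (U : Finset E) (h : Finset E → ℝ) :
    ∑ J ∈ U.powerset.filter (Indep S), h J
      = h ∅ + ∑ J ∈ U.powerset.filter (fun J => J.Nonempty ∧ Indep S J), h J := by
  rw [powerset_filter_indep_eq, Finset.sum_insert]
  simp

/-- The fundamental one-vertex recursion for the independence polynomial. -/
theorem qp_erase {S : E → Finset (Fin n)} (P : E → ℝ) {b : E} {W : Finset E} (hbW : b ∈ W) :
    qp S P (W.erase b) = qp S P W + P b * qp S P (W \ cl S {b}) := by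
  have hsplit := Finset.sum_filter_add_sum_filter_not (W.powerset.filter (Indep S))
    (fun J => {b} ⊆ J) (fun J => (-1 : ℝ) ^ J.card * wP P J)
  have h1 : (W.powerset.filter (Indep S)).filter (fun J => {b} ⊆ J)
      = W.powerset.filter (fun J => Indep S J ∧ {b} ⊆ J) := by
    rw [Finset.filter_filter]
  have h2 : (W.powerset.filter (Indep S)).filter (fun J => ¬ {b} ⊆ J)
      = (W.erase b).powerset.filter (Indep S) := by
    rw [Finset.filter_filter]
    ext J
    simp only [Finset.mem_filter, Finset.mem_powerset, Finset.subset_erase,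
      Finset.singleton_subset_iff]
    tauto
  have h3 : ∑ J ∈ W.powerset.filter (fun J => Indep S J ∧ {b} ⊆ J),
      (-1 : ℝ) ^ J.card * wP P J = - (P b * qp S P (W \ cl S {b})) := by
    rw [sum_indep_superset {b} (indep_singleton S b) W (Finset.singleton_subset_iff.2 hbW)]
    rw [qp, Finset.mul_sum, ← Finset.sum_neg_distrib]
    refine Finset.sum_congr rfl fun J' hJ' => ?_
    simp only [Finset.mem_filter, Finset.mem_powerset] at hJ'
    have hd : Disjoint J' ({b} : Finset E) := disjoint_of_subset_sdiff_cl hJ'.1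
    have hcard : (J' ∪ {b}).card = J'.card + 1 := by
      rw [Finset.card_union_of_disjoint hd, Finset.card_singleton]
    rw [hcard, wP_union_of_disjoint hd]
    have : wP P {b} = P b := by simp [wP]
    rw [this, pow_succ]
    ring
  have hq : qp S P W = - (P b * qp S P (W \ cl S {b})) + qp S P (W.erase b) := by
    rw [qp, ← hsplit, h1, h2, h3]; rfl
  rw [hq]; ring

/-- The key identity: removing a set `A` from the ground set. -/
theorem qp_sdiff {S : E → Finset (Fin n)} (P : E → ℝ) :
    ∀ (A W : Finset E), A ⊆ W →
    qp S P (W \ A) = qp S P W +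
      ∑ J ∈ A.powerset.filter (fun J => J.Nonempty ∧ Indep S J),
        wP P J * qp S P (W \ cl S J) := by
  intro A
  induction A using Finset.strongInduction with
  | _ A ih =>
    intro W hAW
    rcases A.eq_empty_or_nonempty with rfl | ⟨b, hb⟩
    · simp [Finset.powerset_empty, Finset.filter_singleton, Finset.not_nonempty_empty]
    · set A' := A.erase b with hA'def
      have hbW : b ∈ W := hAW hb
      have hA'ss : A' ⊂ A := Finset.erase_ssubset hb
      have hA'W : A' ⊆ W := (Finset.erase_subset b A).trans hAW
      have hbcl : b ∈ cl S {b} := subset_cl {b} (Finset.mem_singleton_self b)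
      have h1 : W \ A = (W \ A').erase b := by
        ext x
        simp only [Finset.mem_sdiff, Finset.mem_erase, hA'def]
        constructor
        · rintro ⟨hxW, hxA⟩
          exact ⟨fun h => hxA (h ▸ hb), hxW, fun h => hxA h.2⟩
        · rintro ⟨hxb, hxW, hxA'⟩
          exact ⟨hxW, fun h => hxA' ⟨hxb, h⟩⟩
      have hbWA' : b ∈ W \ A' := Finset.mem_sdiff.2 ⟨hbW, fun h => (Finset.mem_erase.1 h).1 rfl⟩
      have h2 : (W \ A') \ cl S {b} = (W \ cl S {b}) \ (A' \ cl S {b}) := by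
        ext x
        simp only [Finset.mem_sdiff]
        tauto
      have hsub2 : A' \ cl S {b} ⊂ A :=
        lt_of_le_of_lt Finset.sdiff_subset hA'ss
      have hsub2W : A' \ cl S {b} ⊆ W \ cl S {b} :=
        Finset.sdiff_subset_sdiff hA'W (le_refl _)
      have IH1 := ih A' hA'ss W hA'W
      have IH2 := ih (A' \ cl S {b}) hsub2 (W \ cl S {b}) hsub2W
      -- LHS
      rw [h1, qp_erase P hbWA', IH1, h2, IH2]
      -- now handle RHS sum split
      have hsplit := Finset.sum_filter_add_sum_filter_not
        (A.powerset.filter (fun J => J.Nonempty ∧ Indep S J))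
        (fun J => {b} ⊆ J) (fun J => wP P J * qp S P (W \ cl S J))
      have e2 : (A.powerset.filter (fun J => J.Nonempty ∧ Indep S J)).filter (fun J => ¬ {b} ⊆ J)
          = A'.powerset.filter (fun J => J.Nonempty ∧ Indep S J) := by
        rw [Finset.filter_filter]
        ext J
        simp only [Finset.mem_filter, Finset.mem_powerset, hA'def, Finset.subset_erase,
          Finset.singleton_subset_iff]
        tauto
      have e1 : (A.powerset.filter (fun J => J.Nonempty ∧ Indep S J)).filter (fun J => {b} ⊆ J)
          = A.powerset.filter (fun J => Indep S J ∧ {b} ⊆ J) := by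
        rw [Finset.filter_filter]
        ext J
        simp only [Finset.mem_filter, Finset.mem_powerset, Finset.singleton_subset_iff]
        exact ⟨fun ⟨hJA, ⟨_, hi⟩, hbJ⟩ => ⟨hJA, hi, hbJ⟩,
          fun ⟨hJA, hi, hbJ⟩ => ⟨hJA, ⟨⟨b, hbJ⟩, hi⟩, hbJ⟩⟩
      have hAcl : A \ cl S {b} = A' \ cl S {b} := by
        ext x
        simp only [Finset.mem_sdiff, hA'def, Finset.mem_erase]
        constructor
        · rintro ⟨hxA, hxcl⟩
          exact ⟨⟨fun h => hxcl (h ▸ hbcl), hxA⟩, hxcl⟩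
        · rintro ⟨⟨_, hxA⟩, hxcl⟩
          exact ⟨hxA, hxcl⟩
      have e3 : ∑ J ∈ A.powerset.filter (fun J => Indep S J ∧ {b} ⊆ J),
          wP P J * qp S P (W \ cl S J)
          = P b * qp S P (W \ cl S {b})
            + ∑ J' ∈ (A' \ cl S {b}).powerset.filter (fun J => J.Nonempty ∧ Indep S J),
                P b * (wP P J' * qp S P ((W \ cl S {b}) \ cl S J')) := by
        rw [sum_indep_superset {b} (indep_singleton S b) A (Finset.singleton_subset_iff.2 hb),
          hAcl, sum_indep_split]
        have hterm : ∀ J' ∈ (A' \ cl S {b}).powerset.filter (fun J => J.Nonempty ∧ Indep S J),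
            wP P (J' ∪ {b}) * qp S P (W \ cl S (J' ∪ {b}))
            = P b * (wP P J' * qp S P ((W \ cl S {b}) \ cl S J')) := by
          intro J' hJ'
          simp only [Finset.mem_filter, Finset.mem_powerset] at hJ'
          have hd : Disjoint J' ({b} : Finset E) := disjoint_of_subset_sdiff_cl hJ'.1
          have hw : wP P (J' ∪ {b}) = wP P J' * P b := by
            rw [wP_union_of_disjoint hd]; simp [wP]
          have hcl2 : W \ cl S (J' ∪ {b}) = (W \ cl S {b}) \ cl S J' := by
            rw [cl_union]
            ext x
            simp only [Finset.mem_sdiff, Finset.mem_union]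
            tauto
          rw [hw, hcl2]; ring
        rw [Finset.sum_congr rfl hterm]
        congr 1
        simp [wP, cl_empty]
      rw [← hsplit, e1, e2, e3, mul_add, Finset.mul_sum]
      ring


theorem wP_pos {P : E → ℝ} (hP0 : ∀ b, 0 < P b) (J : Finset E) : 0 < wP P J :=
  Finset.prod_pos fun b _ => hP0 b

theorem qp_univ_pos {S : E → Finset (Fin n)} {P : E → ℝ} (hSh : Shearer S P) :
    0 < qp S P (Finset.univ : Finset E) := by
  have h := hSh.1
  rw [Q_eq (indep_empty S)] at h
  simpa [wP, cl_empty] using h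

theorem qp_cl_nonneg {S : E → Finset (Fin n)} {P : E → ℝ} (hP0 : ∀ b, 0 < P b)
    (hSh : Shearer S P) {J : Finset E} (hJ : Indep S J) :
    0 ≤ qp S P (Finset.univ \ cl S J) := by
  have h := hSh.2 J hJ
  rw [Q_eq hJ] at h
  exact nonneg_of_mul_nonneg_right h (wP_pos hP0 J)

/-- the limiting measure `μ(I) = Q(I)/Q(∅)` -/
noncomputable def nu (S : E → Finset (Fin n)) (P : E → ℝ) (I : Finset E) : ℝ :=
  wP P I * qp S P (Finset.univ \ cl S I) / qp S P Finset.univ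

theorem nu_nonneg {S : E → Finset (Fin n)} {P : E → ℝ} (hP0 : ∀ b, 0 < P b)
    (hSh : Shearer S P) {I : Finset E} (hI : Indep S I) : 0 ≤ nu S P I :=
  div_nonneg (mul_nonneg (wP_pos hP0 I).le (qp_cl_nonneg hP0 hSh hI)) (qp_univ_pos hSh).le

/-- the nonempty independent subsets of the closed neighborhood of `I` -/
noncomputable def subs (S : E → Finset (Fin n)) (I : Finset E) : Finset (Finset E) :=
  (cl S I).powerset.filter (fun J => J.Nonempty ∧ Indep S J)

theorem indep_of_mem_subs {S : E → Finset (Fin n)} {I J : Finset E} (h : J ∈ subs S I) :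
    Indep S J := by
  simp only [subs, Finset.mem_filter] at h
  exact h.2.2

theorem qp_cl_eq {S : E → Finset (Fin n)} (P : E → ℝ) (I : Finset E) :
    qp S P (Finset.univ \ cl S I)
      = qp S P Finset.univ + ∑ J ∈ subs S I, wP P J * qp S P (Finset.univ \ cl S J) :=
  qp_sdiff P (cl S I) Finset.univ (Finset.subset_univ _)

/-- `Seqs k I` : all stable-set sequences of length ≤ k starting at `I`. -/
noncomputable def Seqs (S : E → Finset (Fin n)) : ℕ → Finset E → Finset (List (Finset E))
  | 0, _ => ∅
  | (k+1), I => insert [I] ((subs S I).biUnion fun J => (Seqs S k J).image (List.cons I))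

theorem seqs_shape {S : E → Finset (Fin n)} {k : ℕ} {I : Finset E} {ℓ : List (Finset E)}
    (h : ℓ ∈ Seqs S k I) : ∃ t, ℓ = I :: t := by
  cases k with
  | zero => simp [Seqs] at h
  | succ k =>
    simp only [Seqs, Finset.mem_insert, Finset.mem_biUnion, Finset.mem_image] at h
    rcases h with rfl | ⟨J, _, t, _, rfl⟩
    · exact ⟨[], rfl⟩
    · exact ⟨t, rfl⟩

theorem seqs_head {S : E → Finset (Fin n)} {k : ℕ} {I : Finset E} {ℓ : List (Finset E)}
    (h : ℓ ∈ Seqs S k I) : ℓ.head? = some I := by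
  obtain ⟨t, rfl⟩ := seqs_shape h
  rfl

/-- weight of a sequence -/
noncomputable def wl (P : E → ℝ) (ℓ : List (Finset E)) : ℝ := (ℓ.map (wP P)).prod

theorem wl_nonneg {P : E → ℝ} (hP0 : ∀ b, 0 < P b) (ℓ : List (Finset E)) : 0 ≤ wl P ℓ := by
  induction ℓ with
  | nil => simp [wl]
  | cons a t ih => simpa [wl] using mul_nonneg (wP_pos hP0 a).le (by simpa [wl] using ih)

theorem wl_cons {P : E → ℝ} (I : Finset E) (t : List (Finset E)) :
    wl P (I :: t) = wP P I * wl P t := by simp [wl]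

theorem T_rec {S : E → Finset (Fin n)} (P : E → ℝ) (k : ℕ) (I : Finset E) :
    ∑ ℓ ∈ Seqs S (k+1) I, wl P ℓ
      = wP P I * (1 + ∑ J ∈ subs S I, ∑ ℓ ∈ Seqs S k J, wl P ℓ) := by
  have hnotmem : [I] ∉ (subs S I).biUnion fun J => (Seqs S k J).image (List.cons I) := by
    intro hmem
    rw [Finset.mem_biUnion] at hmem
    obtain ⟨J, hJ, hmem2⟩ := hmem
    obtain ⟨t, ht, heq⟩ := Finset.mem_image.1 hmem2
    have ht' : t = [] := by injection heq
    subst ht'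
    simpa using seqs_head ht
  have hdisj : (↑(subs S I) : Set (Finset E)).PairwiseDisjoint
      (fun J => (Seqs S k J).image (List.cons I)) := by
    intro J hJ J' hJ' hne
    refine Finset.disjoint_left.2 fun ℓ h1 h2 => ?_
    obtain ⟨t, ht, rfl⟩ := Finset.mem_image.1 h1
    obtain ⟨t', ht', heq⟩ := Finset.mem_image.1 h2
    have : t' = t := by injection heq
    subst this
    have e1 := seqs_head ht
    have e2 := seqs_head ht'
    rw [e1] at e2
    exact hne (Option.some_injective _ e2)
  rw [show Seqs S (k+1) I
      = insert [I] ((subs S I).biUnion fun J => (Seqs S k J).image (List.cons I)) from rfl]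
  rw [Finset.sum_insert hnotmem, Finset.sum_biUnion hdisj]
  have himg : ∀ J ∈ subs S I, ∑ ℓ ∈ (Seqs S k J).image (List.cons I), wl P ℓ
      = wP P I * ∑ ℓ ∈ Seqs S k J, wl P ℓ := by
    intro J _
    rw [Finset.sum_image (by intro a _ b _ h; injection h), Finset.mul_sum]
    exact Finset.sum_congr rfl fun t _ => wl_cons I t
  rw [Finset.sum_congr rfl himg, ← Finset.mul_sum]
  have h1 : wl P [I] = wP P I := by simp [wl]
  rw [h1]; ring

/-- Main convergence bound: truncated sums are bounded by `ν`. -/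
theorem T_le_nu {S : E → Finset (Fin n)} {P : E → ℝ} (hP0 : ∀ b, 0 < P b)
    (hSh : Shearer S P) :
    ∀ (k : ℕ) (I : Finset E), Indep S I → ∑ ℓ ∈ Seqs S k I, wl P ℓ ≤ nu S P I := by
  intro k
  induction k with
  | zero => intro I hI; simpa [Seqs] using nu_nonneg hP0 hSh hI
  | succ k ih =>
    intro I hI
    rw [T_rec]
    have hU : (0:ℝ) < qp S P Finset.univ := qp_univ_pos hSh
    have h1 : ∑ J ∈ subs S I, ∑ ℓ ∈ Seqs S k J, wl P ℓ ≤ ∑ J ∈ subs S I, nu S P J :=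
      Finset.sum_le_sum fun J hJ => ih J (indep_of_mem_subs hJ)
    have h2 : wP P I * (1 + ∑ J ∈ subs S I, ∑ ℓ ∈ Seqs S k J, wl P ℓ)
        ≤ wP P I * (1 + ∑ J ∈ subs S I, nu S P J) :=
      mul_le_mul_of_nonneg_left (by linarith) (wP_pos hP0 I).le
    refine h2.trans (le_of_eq ?_)
    have h3 : (1 + ∑ J ∈ subs S I, nu S P J)
        = qp S P (Finset.univ \ cl S I) / qp S P Finset.univ := by
      simp only [nu]
      rw [← Finset.sum_div, qp_cl_eq P I, add_div, div_self hU.ne']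
    rw [h3, nu, mul_div_assoc]


theorem mem_seqs {S : E → Finset (Fin n)} :
    ∀ (ℓ : List (Finset E)) (k : ℕ) (I : Finset E),
      ℓ.head? = some I → List.Chain' (fun A B => B ∈ subs S A) ℓ → ℓ.length ≤ k →
        ℓ ∈ Seqs S k I := by
  intro ℓ
  induction ℓ with
  | nil => intro k I h; simp at h
  | cons A t ih =>
    intro k I hh hc hl
    have hIA : A = I := by
      rw [List.head?_cons] at hh
      exact Option.some_injective _ hh
    subst hIA
    cases k with
    | zero => simp at hl
    | succ k =>
      cases t with
      | nil => exact Finset.mem_insert_self _ _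
      | cons B t' =>
        obtain ⟨hAB, hc'⟩ := List.isChain_cons_cons.1 hc
        have hmem : (B :: t') ∈ Seqs S k B :=
          ih k B rfl hc' (by simpa using Nat.le_of_succ_le_succ hl)
        refine Finset.mem_insert.2 (Or.inr ?_)
        exact Finset.mem_biUnion.2 ⟨B, hAB, Finset.mem_image.2 ⟨B :: t', hmem, rfl⟩⟩

-- ==================== graph development ====================

section Graph

variable {n : ℕ} {E : Type} [Fintype E] {S : E → Finset (Fin n)}

open WDag

theorem edge_wf (G : WDag n E S) : WellFounded (fun v w => G.edge w v) := by
  have h1 : ∀ v, ¬ Relation.TransGen (fun v w : Fin G.size => G.edge w v) v v := by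
    intro v hv
    exact G.acyclic v (Relation.transGen_swap.mp hv)
  have hirr : IsIrrefl _ (Relation.TransGen (fun v w : Fin G.size => G.edge w v)) := ⟨h1⟩
  have hwf : WellFounded (Relation.TransGen (fun v w : Fin G.size => G.edge w v)) :=
    Finite.wellFounded_of_trans_of_irrefl _
  exact @Subrelation.wf _ (Relation.TransGen fun v w : Fin G.size => G.edge w v)
    (fun v w => G.edge w v) (fun h => Relation.TransGen.single h) hwf

/-- Depth of a node: length of the longest directed path out of it. -/
noncomputable def wdepth (G : WDag n E S) : Fin G.size → ℕ :=
  (edge_wf G).fix fun v ih =>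
    (Finset.univ.filter (fun w => G.edge v w)).attach.sup
      (fun w => ih w.1 (Finset.mem_filter.1 w.2).2 + 1)

theorem wdepth_eq (G : WDag n E S) (v : Fin G.size) :
    wdepth G v = (Finset.univ.filter (fun w => G.edge v w)).sup (fun w => wdepth G w + 1) := by
  conv_rhs => rw [← Finset.sup_attach]
  rw [wdepth, WellFounded.fix_eq]

theorem wdepth_lt {G : WDag n E S} {v w : Fin G.size} (h : G.edge v w) :
    wdepth G w < wdepth G v := by
  have hmem : w ∈ Finset.univ.filter (fun w => G.edge v w) :=
    Finset.mem_filter.2 ⟨Finset.mem_univ w, h⟩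
  have h2 : wdepth G w + 1 ≤ wdepth G v := by
    rw [wdepth_eq G v]
    exact Finset.le_sup (f := fun w => wdepth G w + 1) hmem
  omega

theorem sink_wdepth {G : WDag n E S} {v : Fin G.size} (h : IsSink G v) : wdepth G v = 0 := by
  rw [wdepth_eq]
  have : Finset.univ.filter (fun w => G.edge v w) = ∅ :=
    Finset.filter_eq_empty_iff.2 fun w _ => h w
  rw [this, Finset.sup_empty]
  rfl

theorem sink_of_wdepth_zero {G : WDag n E S} {v : Fin G.size} (h : wdepth G v = 0) :
    IsSink G v := by
  intro w hw
  have := wdepth_lt hw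
  omega

theorem exists_succ {G : WDag n E S} {v : Fin G.size} {j : ℕ} (h : wdepth G v = j + 1) :
    ∃ w, G.edge v w ∧ wdepth G w = j := by
  have hne : (Finset.univ.filter (fun w => G.edge v w)).Nonempty := by
    by_contra h'
    rw [Finset.not_nonempty_iff_eq_empty] at h'
    rw [wdepth_eq, h'] at h
    simp at h
  obtain ⟨w, hw, hsup⟩ := Finset.exists_mem_eq_sup _ hne (fun w => wdepth G w + 1)
  rw [wdepth_eq, hsup] at h
  exact ⟨w, (Finset.mem_filter.1 hw).2, by omega⟩

theorem label_inj {G : WDag n E S} {b : E} (hG : SinkLabeled G b) {u v : Fin G.size}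
    (hd : wdepth G u = wdepth G v) (hl : G.label u = G.label v) : u = v := by
  obtain ⟨v₀, hsink, _, huniq⟩ := hG
  by_contra hne
  by_cases hc : (S (G.label u)).Nonempty
  · have hdep : Dep S (G.label u) (G.label v) := by
      obtain ⟨x, hx⟩ := hc
      exact ⟨x, Finset.mem_inter.2 ⟨hx, hl ▸ hx⟩⟩
    rcases G.dep_edge u v hne hdep with h | h
    · have := wdepth_lt h; omega
    · have := wdepth_lt h; omega
  · have hsu : IsSink G u := fun w hw =>
      hc (by obtain ⟨x, hx⟩ := G.edge_dep u w hw; exact ⟨x, (Finset.mem_inter.1 hx).1⟩)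
    have hsv : IsSink G v := fun w hw =>
      hc (by obtain ⟨x, hx⟩ := G.edge_dep v w hw
             exact ⟨x, hl ▸ (Finset.mem_inter.1 hx).1⟩)
    exact hne ((huniq u hsu).trans (huniq v hsv).symm)

/-- The `j`-th layer: labels of the nodes at depth `j`. -/
noncomputable def Lay (G : WDag n E S) (j : ℕ) : Finset E :=
  (Finset.univ.filter (fun v => wdepth G v = j)).image G.label

/-- The maximal depth. -/
noncomputable def Dmax (G : WDag n E S) : ℕ := Finset.univ.sup (wdepth G)

theorem wdepth_le_Dmax (G : WDag n E S) (v : Fin G.size) : wdepth G v ≤ Dmax G :=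
  Finset.le_sup (Finset.mem_univ v)

theorem lay_zero {G : WDag n E S} {b : E} (hG : SinkLabeled G b) : Lay G 0 = {b} := by
  obtain ⟨v₀, hsink, hlab, huniq⟩ := hG
  have h : Finset.univ.filter (fun v => wdepth G v = 0) = {v₀} := by
    ext v
    simp only [Finset.mem_filter, Finset.mem_univ, true_and, Finset.mem_singleton]
    exact ⟨fun h => huniq v (sink_of_wdepth_zero h), fun h => h ▸ sink_wdepth hsink⟩
  rw [Lay, h, Finset.image_singleton, hlab]

theorem lay_indep (G : WDag n E S) (j : ℕ) : Indep S (Lay G j) := by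
  intro a ha c hc hac hdep
  obtain ⟨u, hu, hua⟩ := Finset.mem_image.1 ha
  obtain ⟨v, hv, hvc⟩ := Finset.mem_image.1 hc
  have hdu := (Finset.mem_filter.1 hu).2
  have hdv := (Finset.mem_filter.1 hv).2
  have huv : u ≠ v := fun h => hac (hua ▸ hvc ▸ h ▸ rfl)
  have hdep' : Dep S (G.label u) (G.label v) := by rw [hua, hvc]; exact hdep
  rcases G.dep_edge u v huv hdep' with h | h
  · have := wdepth_lt h; omega
  · have := wdepth_lt h; omega

theorem lay_succ_subset (G : WDag n E S) (j : ℕ) : Lay G (j+1) ⊆ cl S (Lay G j) := by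
  intro c hc
  obtain ⟨v, hv, hvc⟩ := Finset.mem_image.1 hc
  have hdv := (Finset.mem_filter.1 hv).2
  obtain ⟨w, hew, hdw⟩ := exists_succ hdv
  have hwmem : G.label w ∈ Lay G j :=
    Finset.mem_image.2 ⟨w, Finset.mem_filter.2 ⟨Finset.mem_univ w, hdw⟩, rfl⟩
  refine mem_cl.2 ⟨G.label w, hwmem, Or.inr ?_⟩
  have := G.edge_dep v w hew
  rw [hvc] at this
  exact this.symm

theorem exists_wdepth_eq (G : WDag n E S) :
    ∀ (d : ℕ) (v : Fin G.size), wdepth G v = d → ∀ j ≤ d, ∃ w, wdepth G w = j := by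
  intro d
  induction d with
  | zero => intro v hv j hj; exact ⟨v, by omega⟩
  | succ d ihd =>
    intro v hv j hj
    rcases Nat.eq_or_lt_of_le hj with rfl | hlt
    · exact ⟨v, hv⟩
    · obtain ⟨w, _, hdw⟩ := exists_succ hv
      exact ihd w hdw j (by omega)

theorem lay_nonempty {G : WDag n E S} {b : E} (hG : SinkLabeled G b) {j : ℕ}
    (hj : j ≤ Dmax G) : (Lay G j).Nonempty := by
  obtain ⟨v₀, _, _, _⟩ := hG
  have huniv : (Finset.univ : Finset (Fin G.size)).Nonempty := ⟨v₀, Finset.mem_univ v₀⟩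
  obtain ⟨v, _, hsup⟩ := Finset.exists_mem_eq_sup _ huniv (wdepth G)
  rw [Dmax, hsup] at hj
  obtain ⟨w, hw⟩ := exists_wdepth_eq G (wdepth G v) v rfl j hj
  exact ⟨G.label w, Finset.mem_image.2 ⟨w, Finset.mem_filter.2 ⟨Finset.mem_univ w, hw⟩, rfl⟩⟩

theorem lay_empty_of_gt {G : WDag n E S} {j : ℕ} (hj : Dmax G < j) : Lay G j = ∅ := by
  rw [Lay, Finset.image_eq_empty]
  refine Finset.filter_eq_empty_iff.2 fun v _ h => ?_
  have := wdepth_le_Dmax G v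
  omega

theorem edge_iff {G : WDag n E S} (v w : Fin G.size) :
    G.edge v w ↔ Dep S (G.label v) (G.label w) ∧ wdepth G w < wdepth G v := by
  constructor
  · exact fun h => ⟨G.edge_dep v w h, wdepth_lt h⟩
  · rintro ⟨hdep, hlt⟩
    have hne : v ≠ w := by rintro rfl; omega
    rcases G.dep_edge v w hne hdep with h | h
    · exact h
    · have := wdepth_lt h; omega

theorem wt_eq_prod_lay {G : WDag n E S} {b : E} (hG : SinkLabeled G b) (P : E → ℝ) :
    WDag.wt P G = ∏ j ∈ Finset.range (Dmax G + 1), wP P (Lay G j) := by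
  have hmaps : ∀ v : Fin G.size, v ∈ Finset.univ → wdepth G v ∈ Finset.range (Dmax G + 1) :=
    fun v _ => Finset.mem_range.2 (Nat.lt_succ_of_le (wdepth_le_Dmax G v))
  rw [WDag.wt, ← Finset.prod_fiberwise_of_maps_to hmaps (fun v => P (G.label v))]
  refine Finset.prod_congr rfl fun j _ => ?_
  rw [Lay, wP]
  have hinj : ∀ u ∈ Finset.univ.filter (fun v => wdepth G v = j),
      ∀ v ∈ Finset.univ.filter (fun v => wdepth G v = j), G.label u = G.label v → u = v :=
    fun u hu v hv h =>
      label_inj hG (((Finset.mem_filter.1 hu).2).trans ((Finset.mem_filter.1 hv).2).symm) h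
  exact (Finset.prod_image hinj).symm

theorem sinkLabeled_of_iso {G G' : WDag n E S} {b : E} (h : Iso G G')
    (hG : SinkLabeled G b) : SinkLabeled G' b := by
  obtain ⟨e, hl, he⟩ := h
  obtain ⟨v₀, hs, hlab, hu⟩ := hG
  have hsink' : ∀ v : Fin G.size, IsSink G v → IsSink G' (e v) := by
    intro v hv w' hw'
    rw [← Equiv.apply_symm_apply e w'] at hw'
    exact hv _ ((he _ _).1 hw')
  refine ⟨e v₀, hsink' v₀ hs, (hl v₀).trans hlab, ?_⟩
  intro w' hw'
  have hsw : IsSink G (e.symm w') := by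
    intro u hu'
    have : G'.edge w' (e u) := by
      have := (he (e.symm w') u).2 hu'
      rwa [Equiv.apply_symm_apply] at this
    exact hw' (e u) this
  have := hu _ hsw
  rw [← this, Equiv.apply_symm_apply]

theorem iso_of_lay_eq {G G' : WDag n E S} {b : E} (hG : SinkLabeled G b)
    (hG' : SinkLabeled G' b) (hL : ∀ j, Lay G j = Lay G' j) : Iso G G' := by
  have key : ∀ v : Fin G.size, ∃ v' : Fin G'.size,
      wdepth G' v' = wdepth G v ∧ G'.label v' = G.label v := by
    intro v
    have hmem : G.label v ∈ Lay G' (wdepth G v) := by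
      rw [← hL]
      exact Finset.mem_image.2 ⟨v, Finset.mem_filter.2 ⟨Finset.mem_univ v, rfl⟩, rfl⟩
    obtain ⟨v', hv', hlab⟩ := Finset.mem_image.1 hmem
    exact ⟨v', (Finset.mem_filter.1 hv').2, hlab⟩
  have key' : ∀ v' : Fin G'.size, ∃ v : Fin G.size,
      wdepth G v = wdepth G' v' ∧ G.label v = G'.label v' := by
    intro v'
    have hmem : G'.label v' ∈ Lay G (wdepth G' v') := by
      rw [hL]
      exact Finset.mem_image.2 ⟨v', Finset.mem_filter.2 ⟨Finset.mem_univ v', rfl⟩, rfl⟩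
    obtain ⟨v, hv, hlab⟩ := Finset.mem_image.1 hmem
    exact ⟨v, (Finset.mem_filter.1 hv).2, hlab⟩
  choose f hf1 hf2 using key
  choose g hg1 hg2 using key'
  have hgf : ∀ v, g (f v) = v := fun v =>
    label_inj hG (by rw [hg1, hf1]) (by rw [hg2, hf2])
  have hfg : ∀ v', f (g v') = v' := fun v' =>
    label_inj hG' (by rw [hf1, hg1]) (by rw [hf2, hg2])
  refine ⟨⟨f, g, hgf, hfg⟩, fun v => hf2 v, fun v w => ?_⟩
  rw [edge_iff, edge_iff]
  show Dep S (G'.label (f v)) (G'.label (f w)) ∧ wdepth G' (f w) < wdepth G' (f v) ↔ _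
  rw [hf2, hf2, hf1, hf1]

/-- The layer sequence of a witness DAG. -/
noncomputable def layList (G : WDag n E S) : List (Finset E) :=
  (List.range (Dmax G + 1)).map (Lay G)

theorem layList_length (G : WDag n E S) : (layList G).length = Dmax G + 1 := by
  simp [layList]

theorem layList_head {G : WDag n E S} {b : E} (hG : SinkLabeled G b) :
    (layList G).head? = some {b} := by
  rw [layList, List.range_succ_eq_map, List.map_cons, List.head?_cons, lay_zero hG]

theorem layList_chain {G : WDag n E S} {b : E} (hG : SinkLabeled G b) :
    List.Chain' (fun A B => B ∈ subs S A) (layList G) := by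
  rw [layList]; show List.IsChain _ _; rw [List.isChain_map]
  rw [List.isChain_range_succ]
  intro m hm
  simp only [subs, Finset.mem_filter, Finset.mem_powerset]
  exact ⟨lay_succ_subset G m, lay_nonempty hG (by omega), lay_indep G (m+1)⟩

theorem iso_of_layList_eq {G G' : WDag n E S} {b : E} (hG : SinkLabeled G b)
    (hG' : SinkLabeled G' b) (h : layList G = layList G') : Iso G G' := by
  have hD : Dmax G = Dmax G' := by
    have := congrArg List.length h
    simp only [layList_length] at this
    omega
  have hLay : ∀ j, Lay G j = Lay G' j := by
    intro j
    by_cases hj : j ≤ Dmax G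
    · have h1 : (layList G)[j]? = (layList G')[j]? := by rw [h]
      have e1 : (layList G)[j]? = some (Lay G j) := by
        simp [layList, List.getElem?_map, List.getElem?_range (Nat.lt_succ_of_le hj)]
      have e2 : (layList G')[j]? = some (Lay G' j) := by
        simp [layList, List.getElem?_map, List.getElem?_range (Nat.lt_succ_of_le (hD ▸ hj))]
      rw [e1, e2] at h1
      exact Option.some_injective _ h1
    · rw [lay_empty_of_gt (by omega), lay_empty_of_gt (by omega : Dmax G' < j)]
  exact iso_of_lay_eq hG hG' hLay

theorem list_prod_range (f : ℕ → ℝ) : ∀ m, ((List.range m).map f).prod = ∏ j ∈ Finset.range m, f j := by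
  intro m
  induction m with
  | zero => simp
  | succ m ih =>
    rw [List.range_succ, List.map_append, List.prod_append, ih, Finset.prod_range_succ]
    simp

theorem wl_layList {G : WDag n E S} {b : E} (hG : SinkLabeled G b) (P : E → ℝ) :
    wl P (layList G) = WDag.wt P G := by
  rw [wl, layList, List.map_map, list_prod_range]
  simp only [Function.comp]
  exact (wt_eq_prod_lay hG P).symm

theorem layList_mem_seqs {G : WDag n E S} {b : E} (hG : SinkLabeled G b) {k : ℕ}
    (hk : Dmax G + 1 ≤ k) : layList G ∈ Seqs S k {b} :=
  mem_seqs (layList G) k {b} (layList_head hG) (layList_chain hG)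
    (by rw [layList_length]; omega)

end Graph



section Final

variable {n : ℕ} {E : Type} [Fintype E] {S : E → Finset (Fin n)}

theorem cwt_out (P : E → ℝ) (c : WDag.WClass n E S) :
    WDag.cwt P c = WDag.wt P (Quotient.out c) := by
  conv_lhs => rw [← Quotient.out_eq c]
  rfl

theorem cwt_nonneg {P : E → ℝ} (hP0 : ∀ b, 0 < P b) (c : WDag.WClass n E S) :
    0 ≤ WDag.cwt P c := by
  rw [cwt_out]
  exact Finset.prod_nonneg fun _ _ => (hP0 _).le

/-- the one-node witness DAG -/
noncomputable def singletonWDag (S : E → Finset (Fin n)) (b : E) : WDag n E S where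
  size := 1
  label := fun _ => b
  edge := fun _ _ => False
  acyclic := fun v h => by
    rw [@Relation.transGen_eq_self _ _ ⟨fun _ _ _ h _ => h.elim⟩] at h
    exact h
  edge_dep := fun v w h => h.elim
  dep_edge := fun v w hvw _ => absurd (Subsingleton.elim v w) hvw

theorem singletonWDag_sinkLabeled (S : E → Finset (Fin n)) (b : E) :
    WDag.SinkLabeled (singletonWDag S b) b := by
  have hs : (singletonWDag S b).size = 1 := rfl
  refine ⟨⟨0, by omega⟩, fun _ h => h, rfl, fun w _ => ?_⟩
  have h2 : w.1 < 1 := hs ▸ w.2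
  exact Fin.ext (by omega)

theorem singletonWDag_wt (S : E → Finset (Fin n)) (P : E → ℝ) (b : E) :
    WDag.wt P (singletonWDag S b) = P b := by
  show (∏ _v : Fin 1, P b) = P b
  simp

set_option maxHeartbeats 1000000 in
theorem upper_b {P : E → ℝ} (hP0 : ∀ b, 0 < P b) (hSh : Shearer S P) (b : E) :
    (∑' τ : {c : WDag.WClass n E S //
        ∃ G : WDag n E S, Quotient.mk (WDag.wdSetoid n E S) G = c ∧ WDag.SinkLabeled G b},
      ENNReal.ofReal (WDag.cwt P τ.1)) ≤ ENNReal.ofReal (nu S P {b}) := by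
  rw [ENNReal.tsum_eq_iSup_sum]
  refine iSup_le fun F => ?_
  have hSL : ∀ τ : {c : WDag.WClass n E S //
      ∃ G : WDag n E S, Quotient.mk (WDag.wdSetoid n E S) G = c ∧ WDag.SinkLabeled G b},
      WDag.SinkLabeled (Quotient.out τ.1) b := by
    rintro ⟨c, G, hGc, hG⟩
    have hiso : WDag.Iso G (Quotient.out c) :=
      Quotient.exact (hGc.trans (Quotient.out_eq c).symm)
    exact sinkLabeled_of_iso hiso hG
  set k := F.sup (fun τ => Dmax (Quotient.out τ.1) + 1) with hk
  have hmap : ∀ τ ∈ F, layList (Quotient.out τ.1) ∈ Seqs S k {b} := fun τ hτ =>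
    layList_mem_seqs (hSL τ) (Finset.le_sup (f := fun τ => Dmax (Quotient.out τ.1) + 1) hτ)
  have hinj : ∀ τ₁ ∈ F, ∀ τ₂ ∈ F,
      layList (Quotient.out τ₁.1) = layList (Quotient.out τ₂.1) → τ₁ = τ₂ := by
    intro τ₁ _ τ₂ _ h
    have hiso := iso_of_layList_eq (hSL τ₁) (hSL τ₂) h
    refine Subtype.ext ?_
    rw [← Quotient.out_eq τ₁.1, ← Quotient.out_eq τ₂.1]
    exact Quotient.sound hiso
  have hsum : ∑ τ ∈ F, WDag.cwt P τ.1 ≤ nu S P {b} := by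
    have e1 : ∀ τ ∈ F, WDag.cwt P τ.1 = wl P (layList (Quotient.out τ.1)) := by
      intro τ _
      rw [wl_layList (hSL τ) P, cwt_out]
    rw [Finset.sum_congr rfl e1]
    have e2 : ∑ τ ∈ F, wl P (layList (Quotient.out τ.1))
        = ∑ ℓ ∈ F.image (fun τ => layList (Quotient.out τ.1)), wl P ℓ :=
      (Finset.sum_image hinj).symm
    rw [e2]
    have e3 : F.image (fun τ => layList (Quotient.out τ.1)) ⊆ Seqs S k {b} := by
      intro ℓ hℓ
      obtain ⟨τ, hτ, rfl⟩ := Finset.mem_image.1 hℓ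
      exact hmap τ hτ
    refine le_trans (Finset.sum_le_sum_of_subset_of_nonneg e3 fun ℓ _ _ => wl_nonneg hP0 ℓ) ?_
    exact T_le_nu hP0 hSh k {b} (indep_singleton S b)
  calc ∑ τ ∈ F, ENNReal.ofReal (WDag.cwt P τ.1)
      = ENNReal.ofReal (∑ τ ∈ F, WDag.cwt P τ.1) :=
        (ENNReal.ofReal_sum_of_nonneg fun τ _ => cwt_nonneg hP0 τ.1).symm
    _ ≤ ENNReal.ofReal (nu S P {b}) := ENNReal.ofReal_le_ofReal hsum

theorem lower_b (P : E → ℝ) (b : E) :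
    ENNReal.ofReal (P b) ≤
      (∑' τ : {c : WDag.WClass n E S //
        ∃ G : WDag n E S, Quotient.mk (WDag.wdSetoid n E S) G = c ∧ WDag.SinkLabeled G b},
        ENNReal.ofReal (WDag.cwt P τ.1)) := by
  have helem : ∃ G : WDag n E S,
      Quotient.mk (WDag.wdSetoid n E S) G = Quotient.mk (WDag.wdSetoid n E S) (singletonWDag S b)
        ∧ WDag.SinkLabeled G b :=
    ⟨singletonWDag S b, rfl, singletonWDag_sinkLabeled S b⟩
  have h := ENNReal.le_tsum (f := fun τ : {c : WDag.WClass n E S //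
      ∃ G : WDag n E S, Quotient.mk (WDag.wdSetoid n E S) G = c ∧ WDag.SinkLabeled G b} =>
      ENNReal.ofReal (WDag.cwt P τ.1))
    ⟨Quotient.mk (WDag.wdSetoid n E S) (singletonWDag S b), helem⟩
  refine le_trans (le_of_eq ?_) h
  congr 1
  show P b = WDag.cwt P (Quotient.mk (WDag.wdSetoid n E S) (singletonWDag S b))
  rw [show WDag.cwt P (Quotient.mk (WDag.wdSetoid n E S) (singletonWDag S b))
      = WDag.wt P (singletonWDag S b) from rfl, singletonWDag_wt]

end Final

/-- If the probabilities satisfy the Shearer criterion and are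
positive, then m ≤ W' ≤ Σ_B μ(B)/P(B). -/
theorem stmt10 {n : ℕ} {E : Type} [Fintype E] (S : E → Finset (Fin n)) (P : E → ℝ)
    (hP0 : ∀ b, 0 < P b) (hP1 : ∀ b, P b ≤ 1)
    (hSh : Shearer S P) :
    (Fintype.card E : ℝ≥0∞) ≤
      (∑ b : E, ENNReal.ofReal (P b)⁻¹ *
        ∑' τ : {c : WDag.WClass n E S //
          ∃ G : WDag n E S, Quotient.mk (WDag.wdSetoid n E S) G = c ∧ WDag.SinkLabeled G b},
          ENNReal.ofReal (WDag.cwt P τ.1)) ∧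
    (∑ b : E, ENNReal.ofReal (P b)⁻¹ *
        ∑' τ : {c : WDag.WClass n E S //
          ∃ G : WDag n E S, Quotient.mk (WDag.wdSetoid n E S) G = c ∧ WDag.SinkLabeled G b},
          ENNReal.ofReal (WDag.cwt P τ.1))
      ≤ ∑ b : E, ENNReal.ofReal ((Q S P {b} / Q S P ∅) / P b) := by
  constructor
  · have hcard : (Fintype.card E : ℝ≥0∞) = ∑ _b : E, 1 := by simp
    rw [hcard]
    refine Finset.sum_le_sum fun b _ => ?_
    have h1 : (1:ℝ≥0∞) = ENNReal.ofReal (P b)⁻¹ * ENNReal.ofReal (P b) := by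
      rw [← ENNReal.ofReal_mul (inv_nonneg.2 (hP0 b).le), inv_mul_cancel₀ (hP0 b).ne',
        ENNReal.ofReal_one]
    rw [h1]
    exact mul_le_mul_right (lower_b P b) _
  · refine Finset.sum_le_sum fun b _ => ?_
    have step1 := mul_le_mul_right (upper_b hP0 hSh b) (ENNReal.ofReal (P b)⁻¹)
    refine step1.trans (le_of_eq ?_)
    rw [← ENNReal.ofReal_mul (inv_nonneg.2 (hP0 b).le)]
    congr 1
    rw [Q_eq (indep_singleton S b), Q_eq (indep_empty S)]
    have hw1 : wP P ({b} : Finset E) = P b := by simp [wP]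
    have hw0 : wP P (∅ : Finset E) = 1 := by simp [wP]
    rw [hw1, hw0, cl_empty, Finset.sdiff_empty, one_mul, nu, hw1]
    ring

end LLL
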